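/- The subalgebra B_0 of B = B_q(s,t,ϕ) generated by C_s, C_t, K^{±1} is commutative, and there is an F-algebra isomorphism B_0 → F[λ_0^{±1}, λ_1, λ_2] sending K^{±1} ↦ λ_0^{±1}, C_s ↦ λ_1, C_t ↦ λ_2. -/

import Mathlib

open LaurentPolynomial

noncomputable section

/-- The Laurent polynomial `ψ(c·λ)`. -/
noncomputable def lscale {F : Type*} [Field F] (c : F) (ψ : LaurentPolynomial F) :
    LaurentPolynomial F :=
  Finsupp.sum ψ.coeff fun i a => (a * c ^ i) • (T i : LaurentPolynomial F)

/-- The map `ψ ↦ ψ_{s,t}` of Definition 2.4: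
`ψ_{s,t}(λ) = ψ(q⁻¹λ) − (q^{−2s}+q^{−2t})ψ(qλ) + q^{−2s−2t}ψ(q³λ)`. -/
noncomputable def adu {F : Type*} [Field F] (q : F) (s t : ℤ) (ψ : LaurentPolynomial F) :
    LaurentPolynomial F :=
  lscale q⁻¹ ψ - (q ^ (-2*s) + q ^ (-2*t)) • lscale q ψ + q ^ (-2*s-2*t) • lscale (q^3) ψ

/-- `F[λ,λ⁻¹]_{s,t}`: the span of the monomials `λ^i`, `i ∉ {s,t}`. -/
noncomputable def lstSpan (F : Type*) [Field F] (s t : ℤ) :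
    Submodule F (LaurentPolynomial F) :=
  Submodule.span F {ψ : LaurentPolynomial F | ∃ i : ℤ, i ≠ s ∧ i ≠ t ∧ ψ = T i}

/-- `x^i` for `i : ℤ`, interpreting negative powers via a designated inverse `y`. -/
def zpow2 {B : Type*} [Monoid B] (x y : B) (i : ℤ) : B :=
  if 0 ≤ i then x ^ i.toNat else y ^ (-i).toNat

/-- Evaluation `ψ(c·x)` of a Laurent polynomial `ψ`, where `y` plays the role of `x⁻¹`. -/
noncomputable def leval {F : Type*} [Field F] {B : Type*} [Ring B] [Algebra F B]
    (ψ : LaurentPolynomial F) (c : F) (x y : B) : B :=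
  Finsupp.sum ψ.coeff fun i a => (a * c ^ i) • zpow2 x y i

inductive BGen | cs | ct | e | f | k | kinv
deriving DecidableEq

open FreeAlgebra in
/-- Defining relations for `B_q(s,t,φ)`. -/
inductive BRel {F : Type*} [Field F] (q : F) (s t : ℤ) (φ : LaurentPolynomial F) :
    FreeAlgebra F BGen → FreeAlgebra F BGen → Prop
  | csCentral (x) : BRel q s t φ (ι F BGen.cs * x) (x * ι F BGen.cs)
  | ctCentral (x) : BRel q s t φ (ι F BGen.ct * x) (x * ι F BGen.ct)
  | kkinv : BRel q s t φ (ι F BGen.k * ι F BGen.kinv) 1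
  | kinvk : BRel q s t φ (ι F BGen.kinv * ι F BGen.k) 1
  | ke : BRel q s t φ (ι F BGen.k * ι F BGen.e) (q ^ 2 • (ι F BGen.e * ι F BGen.k))
  | kf : BRel q s t φ (ι F BGen.k * ι F BGen.f) ((q ^ 2)⁻¹ • (ι F BGen.f * ι F BGen.k))
  | fe : BRel q s t φ (ι F BGen.f * ι F BGen.e)
      (q ^ s • (ι F BGen.cs * zpow2 (ι F BGen.k) (ι F BGen.kinv) s)
        + q ^ t • (ι F BGen.ct * zpow2 (ι F BGen.k) (ι F BGen.kinv) t)
        + leval φ q (ι F BGen.k) (ι F BGen.kinv))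
  | ef : BRel q s t φ (ι F BGen.e * ι F BGen.f)
      (q ^ (-s) • (ι F BGen.cs * zpow2 (ι F BGen.k) (ι F BGen.kinv) s)
        + q ^ (-t) • (ι F BGen.ct * zpow2 (ι F BGen.k) (ι F BGen.kinv) t)
        + leval φ q⁻¹ (ι F BGen.k) (ι F BGen.kinv))

/-- The algebra `B_q(s,t,φ)`. -/
def BAlg {F : Type*} [Field F] (q : F) (s t : ℤ) (φ : LaurentPolynomial F) : Type _ :=
  RingQuot (BRel q s t φ)

noncomputable instance {F : Type*} [Field F] (q : F) (s t : ℤ) (φ : LaurentPolynomial F) :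
    Ring (BAlg q s t φ) := inferInstanceAs (Ring (RingQuot _))

noncomputable instance {F : Type*} [Field F] (q : F) (s t : ℤ) (φ : LaurentPolynomial F) :
    Algebra F (BAlg q s t φ) := inferInstanceAs (Algebra F (RingQuot _))

/-- The images of the generators in `B_q(s,t,φ)`. -/
noncomputable def bgen {F : Type*} [Field F] (q : F) (s t : ℤ) (φ : LaurentPolynomial F)
    (g : BGen) : BAlg q s t φ :=
  RingQuot.mkAlgHom F (BRel q s t φ) (FreeAlgebra.ι F g)


set_option synthInstance.maxHeartbeats 1000000
set_option maxHeartbeats 1000000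

namespace Aux16

variable {F : Type*} [Field F]

abbrev Lp (F : Type*) [Field F] := LaurentPolynomial (MvPolynomial (Fin 2) F)
abbrev Mm (F : Type*) [Field F] := ℤ →₀ Lp F

noncomputable instance {F : Type*} [Field F] : Ring (Module.End F (Mm F)) :=
  @Module.End.instRing F (Mm F) _ _ _

noncomputable def sdiag (k : ℤ) (w : ℤ → Lp F) : Module.End F (Mm F) :=
  Finsupp.lsum F fun n => (Finsupp.lsingle (n + k)).comp (LinearMap.mulLeft F (w n))

@[simp] lemma sdiag_single (k : ℤ) (w : ℤ → Lp F) (n : ℤ) (c : Lp F) :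
    sdiag k w (Finsupp.single n c) = Finsupp.single (n + k) (w n * c) := by
  rw [sdiag, Finsupp.lsum_single]; rfl

variable (q : F) (s t : ℤ) (φ : LaurentPolynomial F)

noncomputable def Kop : Module.End F (Mm F) :=
  sdiag 0 fun n => (q ^ (-2*n) : F) • (T 1 : Lp F)
noncomputable def Kinvop : Module.End F (Mm F) :=
  sdiag 0 fun n => (q ^ (2*n) : F) • (T (-1) : Lp F)
noncomputable def Csop : Module.End F (Mm F) :=
  sdiag 0 fun _ => (LaurentPolynomial.C (MvPolynomial.X 0) : Lp F)
noncomputable def Ctop : Module.End F (Mm F) :=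
  sdiag 0 fun _ => (LaurentPolynomial.C (MvPolynomial.X 1) : Lp F)
noncomputable def Fop : Module.End F (Mm F) := sdiag 1 fun _ => 1
noncomputable def aC (n : ℤ) : Lp F :=
  (q ^ ((1-2*n)*s)) • ((LaurentPolynomial.C (MvPolynomial.X 0) : Lp F) * T s)
  + (q ^ ((1-2*n)*t)) • ((LaurentPolynomial.C (MvPolynomial.X 1) : Lp F) * T t)
  + Finsupp.sum φ.coeff fun i a => (a * q ^ ((1-2*n)*i)) • (T i : Lp F)
noncomputable def Eop : Module.End F (Mm F) := sdiag (-1) (aC q s t φ)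

lemma sdiag0_pow (w : ℤ → Lp F) (m : ℕ) (n : ℤ) (c : Lp F) :
    ((sdiag 0 w)^m) (Finsupp.single n c) = Finsupp.single n (w n ^ m * c) := by
  induction m generalizing c with
  | zero => simp
  | succ m ih =>
      rw [pow_succ, Module.End.mul_apply, sdiag_single, add_zero, ih, pow_succ]
      ring_nf

lemma zpow2_Kop (hq0 : q ≠ 0) (i n : ℤ) (c : Lp F) :
    zpow2 (Kop q) (Kinvop q) i (Finsupp.single n c)
      = Finsupp.single n ((q ^ (-2*n*i) : F) • ((T i : Lp F) * c)) := by
  rcases le_or_gt 0 i with h | h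
  · have h2 : (i.toNat : ℤ) = i := Int.toNat_of_nonneg h
    rw [zpow2, if_pos h, Kop, sdiag0_pow, smul_pow, T_pow, smul_mul_assoc,
      ← zpow_natCast (q ^ (-2*n)), ← zpow_mul, h2, mul_one]
  · have h2 : (((-i).toNat) : ℤ) = -i := Int.toNat_of_nonneg (by omega)
    rw [zpow2, if_neg (not_le.mpr h), Kinvop, sdiag0_pow, smul_pow, T_pow, smul_mul_assoc,
      ← zpow_natCast (q ^ (2*n)), ← zpow_mul, h2,
      show 2*n*(-i) = -2*n*i from by ring, show (-i) * (-1) = i from by ring]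


lemma map_zpow2 {B C : Type*} [Monoid B] [Monoid C] {FC : Type*} [FunLike FC B C]
    [MonoidHomClass FC B C] (f : FC) (x y : B) (i : ℤ) :
    f (zpow2 x y i) = zpow2 (f x) (f y) i := by
  unfold zpow2; split_ifs <;> rw [map_pow]

lemma map_leval {B C : Type*} [Ring B] [Algebra F B] [Ring C] [Algebra F C] (f : B →ₐ[F] C)
    (ψ : LaurentPolynomial F) (c : F) (x y : B) :
    f (leval ψ c x y) = leval ψ c (f x) (f y) := by
  rw [_root_.leval, _root_.leval, map_finsuppSum]
  exact Finsupp.sum_congr fun i _ => by rw [map_smul, map_zpow2]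

lemma kkinv_op (hq0 : q ≠ 0) : Kop (F := F) q * Kinvop q = 1 := by
  apply Finsupp.lhom_ext; intro n c
  simp only [Kop, Kinvop, Module.End.mul_apply, Module.End.one_apply, sdiag_single, add_zero]
  congr 1
  rw [smul_mul_assoc, smul_mul_assoc, mul_smul_comm, smul_smul, ← zpow_add₀ hq0,
    show -2*n + 2*n = 0 from by ring, zpow_zero, one_smul, ← mul_assoc, ← T_add]
  norm_num

lemma kinvk_op (hq0 : q ≠ 0) : Kinvop (F := F) q * Kop q = 1 := by
  apply Finsupp.lhom_ext; intro n c
  simp only [Kop, Kinvop, Module.End.mul_apply, Module.End.one_apply, sdiag_single, add_zero]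
  congr 1
  rw [smul_mul_assoc, smul_mul_assoc, mul_smul_comm, smul_smul, ← zpow_add₀ hq0,
    show 2*n + -2*n = 0 from by ring, zpow_zero, one_smul, ← mul_assoc, ← T_add]
  norm_num

lemma ke_op (hq0 : q ≠ 0) : Kop q * Eop q s t φ = (q ^ 2 : F) • (Eop q s t φ * Kop q) := by
  apply Finsupp.lhom_ext; intro n c
  simp only [Kop, Eop, Module.End.mul_apply, LinearMap.smul_apply, sdiag_single, add_zero,
    Finsupp.smul_single, smul_smul, mul_smul_comm]
  have h2 : (q:F) ^ (-2*(n + -1)) = q ^ 2 * q ^ (-2*n) := by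
    rw [← zpow_natCast q 2, ← zpow_add₀ hq0]; congr 1; push_cast; ring
  rw [h2]
  simp only [smul_mul_assoc, mul_smul_comm, smul_smul, mul_assoc, mul_left_comm]

lemma kf_op (hq0 : q ≠ 0) : Kop (F := F) q * Fop = ((q ^ 2)⁻¹ : F) • (Fop * Kop q) := by
  apply Finsupp.lhom_ext; intro n c
  simp only [Kop, Fop, Module.End.mul_apply, LinearMap.smul_apply, sdiag_single, add_zero,
    Finsupp.smul_single, smul_smul, mul_smul_comm, one_mul]
  have h2 : (q:F) ^ (-2*(n + 1)) = (q ^ 2)⁻¹ * q ^ (-2*n) := by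
    rw [← zpow_natCast q 2, ← zpow_neg, ← zpow_add₀ hq0]; congr 1; push_cast; ring
  rw [h2]
  simp only [smul_mul_assoc, mul_smul_comm, smul_smul, mul_assoc]

lemma fe_op (hq0 : q ≠ 0) :
    Fop * Eop q s t φ =
      (q ^ s : F) • (Csop * zpow2 (Kop q) (Kinvop q) s)
      + (q ^ t : F) • (Ctop * zpow2 (Kop q) (Kinvop q) t)
      + leval φ q (Kop q) (Kinvop q) := by
  apply Finsupp.lhom_ext; intro n c
  rw [_root_.leval, Finsupp.sum]
  simp only [Module.End.mul_apply, LinearMap.add_apply, LinearMap.smul_apply,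
    LinearMap.coe_sum, Finset.sum_apply, zpow2_Kop q hq0, Fop, Eop, Csop, Ctop,
    sdiag_single, add_zero, Finsupp.smul_single, one_mul]
  rw [show n + -1 + 1 = n from by ring, ← Finsupp.single_add, ← Finsupp.single_finset_sum,
    ← Finsupp.single_add]
  congr 1
  rw [aC, Finsupp.sum]
  simp only [show ∀ i:ℤ, (1-2*n)*i = i + -2*n*i from fun i => by ring, zpow_add₀ hq0]
  simp only [add_mul, Finset.sum_mul, smul_mul_assoc, smul_smul, mul_smul_comm, mul_assoc]

lemma ef_op (hq0 : q ≠ 0) :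
    Eop q s t φ * Fop =
      (q ^ (-s) : F) • (Csop * zpow2 (Kop q) (Kinvop q) s)
      + (q ^ (-t) : F) • (Ctop * zpow2 (Kop q) (Kinvop q) t)
      + leval φ q⁻¹ (Kop q) (Kinvop q) := by
  apply Finsupp.lhom_ext; intro n c
  rw [_root_.leval, Finsupp.sum]
  simp only [Module.End.mul_apply, LinearMap.add_apply, LinearMap.smul_apply,
    LinearMap.coe_sum, Finset.sum_apply, zpow2_Kop q hq0, Fop, Eop, Csop, Ctop,
    sdiag_single, add_zero, Finsupp.smul_single, one_mul]
  rw [show n + 1 + -1 = n from by ring, ← Finsupp.single_add, ← Finsupp.single_finset_sum,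
    ← Finsupp.single_add]
  congr 1
  rw [aC, Finsupp.sum]
  simp only [show ∀ i:ℤ, (1-2*(n+1))*i = -i + -2*n*i from fun i => by ring, zpow_add₀ hq0,
    inv_zpow, ← zpow_neg]
  simp only [add_mul, Finset.sum_mul, smul_mul_assoc, smul_smul, mul_smul_comm, mul_assoc]


noncomputable def rep (q : F) (s t : ℤ) (φ : LaurentPolynomial F) : BGen → Module.End F (Mm F)
  | .cs => Csop
  | .ct => Ctop
  | .e => Eop q s t φ
  | .f => Fop
  | .k => Kop q
  | .kinv => Kinvop q

noncomputable def rho (q : F) (s t : ℤ) (φ : LaurentPolynomial F) :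
    FreeAlgebra F BGen →ₐ[F] Module.End F (Mm F) :=
  FreeAlgebra.lift F (rep q s t φ)

@[simp] lemma rho_ι (g : BGen) : rho q s t φ (FreeAlgebra.ι F g) = rep q s t φ g :=
  FreeAlgebra.lift_ι_apply _ _

lemma const_comm (z : Lp F) (k : ℤ) (w : ℤ → Lp F) :
    (sdiag 0 fun _ => z) * sdiag k w = sdiag k w * (sdiag 0 fun _ => z) := by
  apply Finsupp.lhom_ext; intro n c
  simp only [Module.End.mul_apply, sdiag_single, add_zero, zero_add]
  rw [mul_left_comm]

lemma const_comm_rep (z : Lp F) (g : BGen) :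
    (sdiag 0 fun _ => z) * rep q s t φ g = rep q s t φ g * (sdiag 0 fun _ => z) := by
  cases g <;> exact const_comm _ _ _

lemma const_comm_rho (z : Lp F) (x : FreeAlgebra F BGen) :
    (sdiag 0 fun _ => z) * rho q s t φ x = rho q s t φ x * (sdiag 0 fun _ => z) := by
  induction x using FreeAlgebra.induction with
  | grade0 r => rw [AlgHom.commutes]; exact (Algebra.commutes r _).symm
  | grade1 g => rw [rho_ι]; exact const_comm_rep q s t φ z g
  | mul a b ha hb =>
      rw [map_mul, ← mul_assoc, ha, mul_assoc, hb, mul_assoc]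
  | add a b ha hb =>
      rw [map_add, mul_add, add_mul, ha, hb]

lemma brel_preserved (hq0 : q ≠ 0) ⦃x y : FreeAlgebra F BGen⦄ (h : BRel q s t φ x y) :
    rho q s t φ x = rho q s t φ y := by
  cases h with
  | csCentral x => rw [map_mul, map_mul, rho_ι]; exact const_comm_rho q s t φ _ x
  | ctCentral x => rw [map_mul, map_mul, rho_ι]; exact const_comm_rho q s t φ _ x
  | kkinv => rw [map_mul, map_one, rho_ι, rho_ι]; exact kkinv_op q hq0
  | kinvk => rw [map_mul, map_one, rho_ι, rho_ι]; exact kinvk_op q hq0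
  | ke => rw [map_mul, map_smul, map_mul, rho_ι, rho_ι]; exact ke_op q s t φ hq0
  | kf => rw [map_mul, map_smul, map_mul, rho_ι, rho_ι]; exact kf_op q hq0
  | fe =>
      rw [map_mul, map_add, map_add, map_smul, map_smul, map_mul, map_mul,
        map_leval, map_zpow2, map_zpow2, rho_ι, rho_ι, rho_ι, rho_ι, rho_ι, rho_ι]
      exact fe_op q s t φ hq0
  | ef =>
      rw [map_mul, map_add, map_add, map_smul, map_smul, map_mul, map_mul,
        map_leval, map_zpow2, map_zpow2, rho_ι, rho_ι, rho_ι, rho_ι, rho_ι, rho_ι]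
      exact ef_op q s t φ hq0

noncomputable def rhoq (q : F) (s t : ℤ) (φ : LaurentPolynomial F) (hq0 : q ≠ 0) :
    BAlg q s t φ →ₐ[F] Module.End F (Mm F) :=
  RingQuot.liftAlgHom F ⟨rho q s t φ, fun _ _ h => brel_preserved q s t φ hq0 h⟩

@[simp] lemma rhoq_bgen (hq0 : q ≠ 0) (g : BGen) :
    rhoq q s t φ hq0 (bgen q s t φ g) = rep q s t φ g := by
  rw [bgen, rhoq]
  exact (RingQuot.liftAlgHom_mkAlgHom_apply F (rho q s t φ)
    (fun _ _ h => brel_preserved q s t φ hq0 h) (FreeAlgebra.ι F g)).trans (rho_ι q s t φ g)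

section Sig
variable (hq0 : q ≠ 0)

lemma cs_central (x : BAlg q s t φ) :
    bgen q s t φ BGen.cs * x = x * bgen q s t φ BGen.cs := by
  obtain ⟨y, rfl⟩ := RingQuot.mkAlgHom_surjective F (BRel q s t φ) x
  have h := RingQuot.mkAlgHom_rel F (BRel.csCentral (q := q) (s := s) (t := t) (φ := φ) y)
  rw [map_mul, map_mul] at h
  exact h

lemma ct_central (x : BAlg q s t φ) :
    bgen q s t φ BGen.ct * x = x * bgen q s t φ BGen.ct := by
  obtain ⟨y, rfl⟩ := RingQuot.mkAlgHom_surjective F (BRel q s t φ) x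
  have h := RingQuot.mkAlgHom_rel F (BRel.ctCentral (q := q) (s := s) (t := t) (φ := φ) y)
  rw [map_mul, map_mul] at h
  exact h

lemma adjoinCT_le_center :
    Algebra.adjoin F {bgen q s t φ BGen.cs, bgen q s t φ BGen.ct}
      ≤ Subalgebra.center F (BAlg q s t φ) := by
  apply Algebra.adjoin_le
  rintro x (rfl | rfl)
  · exact Subalgebra.mem_center_iff.mpr fun b => (cs_central q s t φ b).symm
  · exact Subalgebra.mem_center_iff.mpr fun b => (ct_central q s t φ b).symm

noncomputable def genCT :
    Fin 2 → (Algebra.adjoin F {bgen q s t φ BGen.cs, bgen q s t φ BGen.ct}) :=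
  ![⟨bgen q s t φ BGen.cs, Algebra.subset_adjoin (by simp)⟩,
    ⟨bgen q s t φ BGen.ct, Algebra.subset_adjoin (by simp)⟩]

@[reducible] noncomputable def adjCTcomm :
    CommRing (Algebra.adjoin F {bgen q s t φ BGen.cs, bgen q s t φ BGen.ct}) :=
  Algebra.adjoinCommRingOfComm F (by
    rintro a (rfl | rfl) b (rfl | rfl)
    · rfl
    · exact cs_central q s t φ _
    · exact ct_central q s t φ _
    · rfl)

noncomputable def fCT : MvPolynomial (Fin 2) F →ₐ[F] BAlg q s t φ :=
  letI := adjCTcomm q s t φ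
  (Subalgebra.val _).comp (MvPolynomial.aeval (genCT q s t φ))

lemma fCT_mem (p : MvPolynomial (Fin 2) F) :
    fCT q s t φ p ∈ Algebra.adjoin F {bgen q s t φ BGen.cs, bgen q s t φ BGen.ct} := by
  letI := adjCTcomm q s t φ
  rw [fCT, AlgHom.comp_apply]
  exact SetLike.coe_mem _

lemma fCT_central (p : MvPolynomial (Fin 2) F) (x : BAlg q s t φ) :
    Commute (fCT q s t φ p) x :=
  (Subalgebra.mem_center_iff.mp (adjoinCT_le_center q s t φ (fCT_mem q s t φ p)) x).symm

lemma fCT_X0 : fCT q s t φ (MvPolynomial.X 0) = bgen q s t φ BGen.cs := by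
  letI := adjCTcomm q s t φ
  rw [fCT, AlgHom.comp_apply, MvPolynomial.aeval_X, genCT]
  simp

lemma fCT_X1 : fCT q s t φ (MvPolynomial.X 1) = bgen q s t φ BGen.ct := by
  letI := adjCTcomm q s t φ
  rw [fCT, AlgHom.comp_apply, MvPolynomial.aeval_X, genCT]
  simp

noncomputable def uK : (BAlg q s t φ)ˣ where
  val := bgen q s t φ BGen.k
  inv := bgen q s t φ BGen.kinv
  val_inv := by
    have h := RingQuot.mkAlgHom_rel F (BRel.kkinv (q := q) (s := s) (t := t) (φ := φ))
    rw [map_mul, map_one] at h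
    exact h
  inv_val := by
    have h := RingQuot.mkAlgHom_rel F (BRel.kinvk (q := q) (s := s) (t := t) (φ := φ))
    rw [map_mul, map_one] at h
    exact h

noncomputable def sig : Lp F →ₐ[F] BAlg q s t φ :=
  AddMonoidAlgebra.liftNCAlgHom (fCT q s t φ)
    ((Units.coeHom _).comp (zpowersHom (BAlg q s t φ)ˣ (uK q s t φ)))
    (fun p z => fCT_central q s t φ p _)

lemma sig_single (n : ℤ) (p : MvPolynomial (Fin 2) F) :
    sig q s t φ (AddMonoidAlgebra.single n p)
      = fCT q s t φ p * ((uK q s t φ ^ n : (BAlg q s t φ)ˣ) : BAlg q s t φ) := by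
  rw [sig]
  show AddMonoidAlgebra.liftNC _ _ _ = _
  rw [AddMonoidAlgebra.liftNC_single]
  simp

noncomputable def chi (hq0 : q ≠ 0) (x : BAlg q s t φ) : Lp F :=
  (rhoq q s t φ hq0 x (Finsupp.single 0 1)) 0

lemma rep_cs_single0 (c : Lp F) :
    rep q s t φ BGen.cs (Finsupp.single 0 c)
      = Finsupp.single 0 ((LaurentPolynomial.C (MvPolynomial.X 0) : Lp F) * c) := by
  show Csop (Finsupp.single 0 c) = _
  rw [Csop, sdiag_single, add_zero]

lemma rep_ct_single0 (c : Lp F) :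
    rep q s t φ BGen.ct (Finsupp.single 0 c)
      = Finsupp.single 0 ((LaurentPolynomial.C (MvPolynomial.X 1) : Lp F) * c) := by
  show Ctop (Finsupp.single 0 c) = _
  rw [Ctop, sdiag_single, add_zero]

lemma rep_k_single0 (c : Lp F) :
    rep q s t φ BGen.k (Finsupp.single 0 c)
      = Finsupp.single 0 ((T 1 : Lp F) * c) := by
  show Kop q (Finsupp.single 0 c) = _
  rw [Kop, sdiag_single, add_zero, mul_zero, zpow_zero, one_smul]

lemma rep_kinv_single0 (c : Lp F) :
    rep q s t φ BGen.kinv (Finsupp.single 0 c)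
      = Finsupp.single 0 ((T (-1) : Lp F) * c) := by
  show Kinvop q (Finsupp.single 0 c) = _
  rw [Kinvop, sdiag_single, add_zero, mul_zero, zpow_zero, one_smul]

lemma kop_pow_single0 (m : ℕ) (c : Lp F) :
    ((Kop q)^m) (Finsupp.single 0 c) = Finsupp.single 0 ((T m : Lp F) * c) := by
  rw [Kop, sdiag0_pow, mul_zero, zpow_zero, one_smul, T_pow, mul_one]

lemma kinvop_pow_single0 (m : ℕ) (c : Lp F) :
    ((Kinvop q)^m) (Finsupp.single 0 c) = Finsupp.single 0 ((T (-(m:ℤ)) : Lp F) * c) := by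
  rw [Kinvop, sdiag0_pow, mul_zero, zpow_zero, one_smul, T_pow,
    show ((m:ℤ)) * -1 = -(m:ℤ) from by ring]

lemma rhoq_upow (hq0 : q ≠ 0) (n : ℤ) (c : Lp F) :
    rhoq q s t φ hq0 ((uK q s t φ ^ n : (BAlg q s t φ)ˣ) : BAlg q s t φ) (Finsupp.single 0 c)
      = Finsupp.single 0 ((T n : Lp F) * c) := by
  have hv : ((uK q s t φ : BAlg q s t φ)) = bgen q s t φ BGen.k := rfl
  have hv' : ((uK q s t φ)⁻¹ : (BAlg q s t φ)ˣ).val = bgen q s t φ BGen.kinv := rfl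
  rcases n with m | m
  · rw [Int.ofNat_eq_coe, zpow_natCast, Units.val_pow_eq_pow_val, map_pow, hv, rhoq_bgen,
      show rep q s t φ BGen.k = Kop q from rfl, kop_pow_single0]
  · rw [zpow_negSucc, ← inv_pow, Units.val_pow_eq_pow_val, map_pow, hv', rhoq_bgen,
      show rep q s t φ BGen.kinv = Kinvop q from rfl, kinvop_pow_single0,
      show (-((m+1 : ℕ) : ℤ)) = Int.negSucc m from by simp [Int.negSucc_eq]]

lemma rhoq_fCT_single0 (hq0 : q ≠ 0) (p : MvPolynomial (Fin 2) F) (c : Lp F) :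
    rhoq q s t φ hq0 (fCT q s t φ p) (Finsupp.single 0 c)
      = Finsupp.single 0 ((LaurentPolynomial.C p : Lp F) * c) := by
  induction p using MvPolynomial.induction_on generalizing c with
  | C a =>
      rw [show (MvPolynomial.C a : MvPolynomial (Fin 2) F) = algebraMap F _ a from rfl,
        AlgHom.commutes, AlgHom.commutes, Module.algebraMap_end_apply, Finsupp.smul_single,
        show (LaurentPolynomial.C (algebraMap F (MvPolynomial (Fin 2) F) a) : Lp F)
          = algebraMap F (Lp F) a from rfl, ← Algebra.smul_def]
  | add p1 p2 h1 h2 =>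
      rw [map_add, map_add, LinearMap.add_apply, h1, h2, map_add, add_mul,
        Finsupp.single_add]
  | mul_X p1 i h1 =>
      rw [map_mul, map_mul, Module.End.mul_apply]
      fin_cases i <;> simp only [Fin.zero_eta, Fin.mk_one, Fin.isValue]
      · rw [fCT_X0, rhoq_bgen, rep_cs_single0, h1, map_mul, mul_assoc]
      · rw [fCT_X1, rhoq_bgen, rep_ct_single0, h1, map_mul, mul_assoc]

lemma chi_sig_single (hq0 : q ≠ 0) (n : ℤ) (p : MvPolynomial (Fin 2) F) :
    chi q s t φ hq0 (sig q s t φ (AddMonoidAlgebra.single n p)) = AddMonoidAlgebra.single n p := by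
  rw [sig_single, chi, map_mul, Module.End.mul_apply, rhoq_upow, mul_one, rhoq_fCT_single0,
    Finsupp.single_eq_same, ← single_eq_C_mul_T]

lemma upow_mem (n : ℤ) :
    ((uK q s t φ ^ n : (BAlg q s t φ)ˣ) : BAlg q s t φ) ∈ Algebra.adjoin F ({bgen q s t φ BGen.cs, bgen q s t φ BGen.ct, bgen q s t φ BGen.k, bgen q s t φ BGen.kinv} : Set (BAlg q s t φ)) := by
  have hk : bgen q s t φ BGen.k ∈ Algebra.adjoin F ({bgen q s t φ BGen.cs, bgen q s t φ BGen.ct, bgen q s t φ BGen.k, bgen q s t φ BGen.kinv} : Set (BAlg q s t φ)) :=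
    Algebra.subset_adjoin (by simp)
  have hkinv : bgen q s t φ BGen.kinv ∈ Algebra.adjoin F ({bgen q s t φ BGen.cs, bgen q s t φ BGen.ct, bgen q s t φ BGen.k, bgen q s t φ BGen.kinv} : Set (BAlg q s t φ)) :=
    Algebra.subset_adjoin (by simp)
  rcases n with m | m
  · rw [Int.ofNat_eq_coe, zpow_natCast, Units.val_pow_eq_pow_val]
    exact pow_mem hk m
  · rw [zpow_negSucc, ← inv_pow, Units.val_pow_eq_pow_val]
    exact pow_mem hkinv (m+1)

lemma sig_mem (x : Lp F) : sig q s t φ x ∈ Algebra.adjoin F ({bgen q s t φ BGen.cs, bgen q s t φ BGen.ct, bgen q s t φ BGen.k, bgen q s t φ BGen.kinv} : Set (BAlg q s t φ)) := by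
  induction x using AddMonoidAlgebra.induction with
  | zero => rw [map_zero]; exact zero_mem _
  | single_add n p f hn hp ih =>
      rw [map_add, sig_single]
      refine add_mem (mul_mem ?_ (upow_mem q s t φ n)) ih
      refine Algebra.adjoin_mono ?_ (fCT_mem q s t φ p)
      intro z hz
      simp only [Set.mem_insert_iff, Set.mem_singleton_iff] at hz ⊢
      tauto

lemma key (hq0 : q ≠ 0) {x : BAlg q s t φ} (hx : x ∈ Algebra.adjoin F ({bgen q s t φ BGen.cs, bgen q s t φ BGen.ct, bgen q s t φ BGen.k, bgen q s t φ BGen.kinv} : Set (BAlg q s t φ))) :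
    ∀ c : Lp F, rhoq q s t φ hq0 x (Finsupp.single 0 c)
      = Finsupp.single 0 (chi q s t φ hq0 x * c) := by
  induction hx using Algebra.adjoin_induction with
  | mem y hy =>
      simp only [Set.mem_insert_iff, Set.mem_singleton_iff] at hy
      rcases hy with rfl | rfl | rfl | rfl
      · intro c
        simp only [rhoq_bgen, rep_cs_single0, chi, mul_one, Finsupp.single_eq_same]
      · intro c
        simp only [rhoq_bgen, rep_ct_single0, chi, mul_one, Finsupp.single_eq_same]
      · intro c
        simp only [rhoq_bgen, rep_k_single0, chi, mul_one, Finsupp.single_eq_same]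
      · intro c
        simp only [rhoq_bgen, rep_kinv_single0, chi, mul_one, Finsupp.single_eq_same]
  | algebraMap r =>
      intro c
      rw [AlgHom.commutes, Module.algebraMap_end_apply, Finsupp.smul_single, chi,
        AlgHom.commutes, Module.algebraMap_end_apply, Finsupp.smul_single,
        Finsupp.single_eq_same, smul_mul_assoc, one_mul]
  | add x y hx hy ihx ihy =>
      have hchi : chi q s t φ hq0 (x+y) = chi q s t φ hq0 x + chi q s t φ hq0 y := by
        rw [chi, map_add, LinearMap.add_apply, ihx 1, ihy 1, Finsupp.add_apply,
          Finsupp.single_eq_same, Finsupp.single_eq_same, mul_one, mul_one, chi, chi]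
      intro c
      rw [map_add, LinearMap.add_apply, ihx c, ihy c, hchi, add_mul, Finsupp.single_add]
  | mul x y hx hy ihx ihy =>
      have hchi : chi q s t φ hq0 (x*y) = chi q s t φ hq0 x * chi q s t φ hq0 y := by
        rw [chi, map_mul, Module.End.mul_apply, ihy 1, mul_one, ihx (chi q s t φ hq0 y),
          Finsupp.single_eq_same]
      intro c
      rw [map_mul, Module.End.mul_apply, ihy c, ihx (chi q s t φ hq0 y * c), hchi, mul_assoc]

lemma chi_mul (hq0 : q ≠ 0) {x y : BAlg q s t φ} (hx : x ∈ Algebra.adjoin F ({bgen q s t φ BGen.cs, bgen q s t φ BGen.ct, bgen q s t φ BGen.k, bgen q s t φ BGen.kinv} : Set (BAlg q s t φ)))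
    (hy : y ∈ Algebra.adjoin F ({bgen q s t φ BGen.cs, bgen q s t φ BGen.ct, bgen q s t φ BGen.k, bgen q s t φ BGen.kinv} : Set (BAlg q s t φ))) :
    chi q s t φ hq0 (x*y) = chi q s t φ hq0 x * chi q s t φ hq0 y := by
  rw [chi, map_mul, Module.End.mul_apply, key q s t φ hq0 hy 1, mul_one,
    key q s t φ hq0 hx, Finsupp.single_eq_same]

lemma chi_add (hq0 : q ≠ 0) (x y : BAlg q s t φ) :
    chi q s t φ hq0 (x+y) = chi q s t φ hq0 x + chi q s t φ hq0 y := by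
  rw [chi, map_add (rhoq q s t φ hq0), LinearMap.add_apply, Finsupp.add_apply]; rfl

lemma chi_zero (hq0 : q ≠ 0) : chi q s t φ hq0 0 = 0 := by
  rw [chi, map_zero (rhoq q s t φ hq0), LinearMap.zero_apply]; rfl

lemma chi_one (hq0 : q ≠ 0) : chi q s t φ hq0 1 = 1 := by
  rw [chi, map_one, Module.End.one_apply, Finsupp.single_eq_same]

lemma chi_algebraMap (hq0 : q ≠ 0) (r : F) :
    chi q s t φ hq0 (algebraMap F (BAlg q s t φ) r) = algebraMap F (Lp F) r := by
  rw [chi, AlgHom.commutes, Module.algebraMap_end_apply, Finsupp.smul_single,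
    Finsupp.single_eq_same, Algebra.algebraMap_eq_smul_one]

lemma chi_cs (hq0 : q ≠ 0) :
    chi q s t φ hq0 (bgen q s t φ BGen.cs) = LaurentPolynomial.C (MvPolynomial.X 0) := by
  rw [chi, rhoq_bgen, rep_cs_single0, mul_one, Finsupp.single_eq_same]

lemma chi_ct (hq0 : q ≠ 0) :
    chi q s t φ hq0 (bgen q s t φ BGen.ct) = LaurentPolynomial.C (MvPolynomial.X 1) := by
  rw [chi, rhoq_bgen, rep_ct_single0, mul_one, Finsupp.single_eq_same]

lemma chi_k (hq0 : q ≠ 0) :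
    chi q s t φ hq0 (bgen q s t φ BGen.k) = T 1 := by
  rw [chi, rhoq_bgen, rep_k_single0, mul_one, Finsupp.single_eq_same]

lemma chi_kinv (hq0 : q ≠ 0) :
    chi q s t φ hq0 (bgen q s t φ BGen.kinv) = T (-1) := by
  rw [chi, rhoq_bgen, rep_kinv_single0, mul_one, Finsupp.single_eq_same]

lemma sig_T1 : sig q s t φ (T 1) = bgen q s t φ BGen.k := by
  rw [show (T 1 : Lp F) = AddMonoidAlgebra.single 1 1 from rfl, sig_single, map_one, one_mul, zpow_one]
  rfl

lemma sig_Tneg1 : sig q s t φ (T (-1)) = bgen q s t φ BGen.kinv := by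
  rw [show (T (-1) : Lp F) = AddMonoidAlgebra.single (-1) 1 from rfl, sig_single, map_one, one_mul,
    zpow_neg_one]
  rfl

lemma sig_CX0 :
    sig q s t φ (LaurentPolynomial.C (MvPolynomial.X 0)) = bgen q s t φ BGen.cs := by
  rw [show (LaurentPolynomial.C (MvPolynomial.X 0) : Lp F)
      = AddMonoidAlgebra.single 0 (MvPolynomial.X 0) from rfl, sig_single, zpow_zero, Units.val_one,
    mul_one, fCT_X0]

lemma sig_CX1 :
    sig q s t φ (LaurentPolynomial.C (MvPolynomial.X 1)) = bgen q s t φ BGen.ct := by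
  rw [show (LaurentPolynomial.C (MvPolynomial.X 1) : Lp F)
      = AddMonoidAlgebra.single 0 (MvPolynomial.X 1) from rfl, sig_single, zpow_zero, Units.val_one,
    mul_one, fCT_X1]


lemma sig_chi (hq0 : q ≠ 0) {x : BAlg q s t φ} (hx : x ∈ Algebra.adjoin F ({bgen q s t φ BGen.cs, bgen q s t φ BGen.ct, bgen q s t φ BGen.k, bgen q s t φ BGen.kinv} : Set (BAlg q s t φ))) :
    sig q s t φ (chi q s t φ hq0 x) = x := by
  induction hx using Algebra.adjoin_induction with
  | mem y hy =>
      simp only [Set.mem_insert_iff, Set.mem_singleton_iff] at hy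
      rcases hy with rfl | rfl | rfl | rfl
      · rw [chi_cs, sig_CX0]
      · rw [chi_ct, sig_CX1]
      · rw [chi_k, sig_T1]
      · rw [chi_kinv, sig_Tneg1]
  | algebraMap r => rw [chi_algebraMap, AlgHom.commutes]
  | add x y hx hy ihx ihy => rw [chi_add, map_add, ihx, ihy]
  | mul x y hx hy ihx ihy => rw [chi_mul q s t φ hq0 hx hy, map_mul, ihx, ihy]

lemma chi_sig (hq0 : q ≠ 0) (x : Lp F) :
    chi q s t φ hq0 (sig q s t φ x) = x := by
  induction x using AddMonoidAlgebra.induction with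
  | zero => rw [map_zero, chi_zero]
  | single_add n p f hn hp ih => rw [map_add, chi_add, chi_sig_single, ih]


end Sig
end Aux16

open Aux16 in
set_option synthInstance.maxHeartbeats 1000000 in
set_option maxHeartbeats 1000000 in
theorem stmt16 {F : Type*} [Field F] (q : F) (hq0 : q ≠ 0)
    (hq : ∀ n : ℕ, 0 < n → q ^ n ≠ 1) (s t : ℤ) (hst : s ≠ t)
    (φ : LaurentPolynomial F) (hφ : φ.coeff s = 0 ∧ φ.coeff t = 0)
    (B0 : Subalgebra F (BAlg q s t φ))
    (hB0 : B0 = Algebra.adjoin F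
      {bgen q s t φ BGen.cs, bgen q s t φ BGen.ct, bgen q s t φ BGen.k,
        bgen q s t φ BGen.kinv}) :
    (∀ x y : B0, x * y = y * x) ∧
    ∃ g : B0 ≃ₐ[F] LaurentPolynomial (MvPolynomial (Fin 2) F),
      (∀ x : B0, (x : BAlg q s t φ) = bgen q s t φ BGen.k → g x = T 1) ∧
      (∀ x : B0, (x : BAlg q s t φ) = bgen q s t φ BGen.kinv → g x = T (-1)) ∧
      (∀ x : B0, (x : BAlg q s t φ) = bgen q s t φ BGen.cs →
        g x = LaurentPolynomial.C (MvPolynomial.X 0)) ∧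
      (∀ x : B0, (x : BAlg q s t φ) = bgen q s t φ BGen.ct →
        g x = LaurentPolynomial.C (MvPolynomial.X 1)) := by
  subst hB0
  let chiH : Algebra.adjoin F {bgen q s t φ BGen.cs, bgen q s t φ BGen.ct,
      bgen q s t φ BGen.k, bgen q s t φ BGen.kinv}
      →ₐ[F] LaurentPolynomial (MvPolynomial (Fin 2) F) :=
    { toFun := fun x => Aux16.chi q s t φ hq0 x.1
      map_one' := Aux16.chi_one q s t φ hq0
      map_mul' := fun x y => Aux16.chi_mul q s t φ hq0 x.2 y.2
      map_zero' := Aux16.chi_zero q s t φ hq0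
      map_add' := fun x y => Aux16.chi_add q s t φ hq0 x.1 y.1
      commutes' := fun r => Aux16.chi_algebraMap q s t φ hq0 r }
  let sigH : LaurentPolynomial (MvPolynomial (Fin 2) F) →ₐ[F]
      Algebra.adjoin F {bgen q s t φ BGen.cs, bgen q s t φ BGen.ct,
        bgen q s t φ BGen.k, bgen q s t φ BGen.kinv} :=
    (Aux16.sig q s t φ).codRestrict _ (Aux16.sig_mem q s t φ)
  have h1 : chiH.comp sigH = AlgHom.id F _ := AlgHom.ext fun y => by
    show Aux16.chi q s t φ hq0 (Aux16.sig q s t φ y) = y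
    exact Aux16.chi_sig q s t φ hq0 y
  have h2 : sigH.comp chiH = AlgHom.id F _ := AlgHom.ext fun x => Subtype.ext (by
    show Aux16.sig q s t φ (Aux16.chi q s t φ hq0 x.1) = x.1
    exact Aux16.sig_chi q s t φ hq0 x.2)
  let g0 := AlgEquiv.ofAlgHom chiH sigH h1 h2
  refine ⟨fun x y => g0.injective (by rw [map_mul, map_mul, mul_comm]), g0, ?_, ?_, ?_, ?_⟩
  · intro x hx
    show Aux16.chi q s t φ hq0 x.1 = T 1
    rw [hx]
    exact Aux16.chi_k q s t φ hq0
  · intro x hx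
    show Aux16.chi q s t φ hq0 x.1 = T (-1)
    rw [hx]
    exact Aux16.chi_kinv q s t φ hq0
  · intro x hx
    show Aux16.chi q s t φ hq0 x.1 = LaurentPolynomial.C (MvPolynomial.X 0)
    rw [hx]
    exact Aux16.chi_cs q s t φ hq0
  · intro x hx
    show Aux16.chi q s t φ hq0 x.1 = LaurentPolynomial.C (MvPolynomial.X 1)
    rw [hx]
    exact Aux16.chi_ct q s t φ hq0


end
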